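/- (Lovász–Stein covering lemma) Let Γ be a finite bipartite graph with parts P and Q such that every vertex p ∈ P has degree at least a ≥ 1 and every vertex q ∈ Q has degree at most b ≥ 1. Then there exists a subset Q' ⊆ Q covering P (i.e., every p ∈ P has a neighbour in Q') with |Q'| ≤ (|Q|/a)(1 + ln b). -/

import Mathlib

open Finset

noncomputable def gfun (c x : ℝ) : ℝ := min x c + c * Real.log (max (x / c) 1)

lemma log_lower {y : ℝ} (hy : 0 < y) : 1 - 1/y ≤ Real.log y := by
  have h := Real.log_le_sub_one_of_pos (x := 1/y) (by positivity)
  rw [Real.log_div one_ne_zero (ne_of_gt hy), Real.log_one] at h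
  linarith

lemma harmonic_step {c : ℝ} (hc : 1 ≤ c) (k : ℕ) :
    min 1 (c / (k + 1)) ≤ gfun c (k + 1) - gfun c k := by
  have hx : (0:ℝ) ≤ k := Nat.cast_nonneg k
  set x : ℝ := (k : ℝ) with hxdef
  have hc0 : (0:ℝ) < c := by linarith
  rcases le_or_gt (x + 1) c with h1 | h1
  · -- both ≤ c
    have e1 : gfun c (x+1) = x + 1 := by
      unfold gfun
      rw [min_eq_left h1, max_eq_right (by rw [div_le_one hc0]; linarith), Real.log_one]
      ring
    have e2 : gfun c x = x := by
      unfold gfun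
      rw [min_eq_left (by linarith), max_eq_right (by rw [div_le_one hc0]; linarith),
        Real.log_one]
      ring
    rw [e1, e2]
    simp [min_le_left]
  · rcases le_or_gt c x with h2 | h2
    · -- both ≥ c
      have hx1 : (0:ℝ) < x := lt_of_lt_of_le hc0 h2
      have e1 : gfun c (x+1) = c + c * Real.log ((x+1)/c) := by
        unfold gfun
        rw [min_eq_right (by linarith), max_eq_left (by rw [le_div_iff₀ hc0]; linarith)]
      have e2 : gfun c x = c + c * Real.log (x/c) := by
        unfold gfun
        rw [min_eq_right h2, max_eq_left (by rw [le_div_iff₀ hc0]; linarith)]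
      rw [e1, e2]
      have hlog : 1/(x+1) ≤ Real.log ((x+1)/c) - Real.log (x/c) := by
        rw [Real.log_div (by positivity) (ne_of_gt hc0),
          Real.log_div (ne_of_gt hx1) (ne_of_gt hc0)]
        have := log_lower (y := (x+1)/x) (by positivity)
        rw [Real.log_div (by positivity) (ne_of_gt hx1)] at this
        rw [one_div, inv_div] at this
        have hfrac : 1 - x/(x+1) = 1/(x+1) := by field_simp; ring
        linarith
      have hmin : min 1 (c/(x+1)) ≤ c/(x+1) := min_le_right _ _
      have : c/(x+1) = c * (1/(x+1)) := by ring
      nlinarith [mul_le_mul_of_nonneg_left hlog (le_of_lt hc0)]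
    · -- x < c < x + 1
      have e1 : gfun c (x+1) = c + c * Real.log ((x+1)/c) := by
        unfold gfun
        rw [min_eq_right (by linarith), max_eq_left (by rw [le_div_iff₀ hc0]; linarith)]
      have e2 : gfun c x = x := by
        unfold gfun
        rw [min_eq_left (le_of_lt h2), max_eq_right (by rw [div_le_one hc0]; linarith),
          Real.log_one]
        ring
      rw [e1, e2]
      have hlog : 1 - c/(x+1) ≤ Real.log ((x+1)/c) := by
        have h := log_lower (y := (x+1)/c) (by positivity)
        rw [one_div, inv_div] at h
        exact h
      have hmin : min 1 (c/(x+1)) ≤ c/(x+1) := min_le_right _ _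
      have hx1 : (0:ℝ) < x + 1 := by linarith
      have key : c/(x+1) ≤ c + c * (1 - c/(x+1)) - x := by
        have heq : c + c * (1 - c/(x+1)) - x - c/(x+1) = ((c - x) * (x + 1 - c))/(x+1) := by
          field_simp
          ring
        have hnn : (0:ℝ) ≤ ((c - x) * (x + 1 - c))/(x+1) :=
          div_nonneg (mul_nonneg (by linarith) (by linarith)) (by linarith)
        linarith
      have := mul_le_mul_of_nonneg_left hlog (le_of_lt hc0)
      linarith

lemma telescope {c : ℝ} (hc : 1 ≤ c) (M : ℕ) :
    ∑ k ∈ range M, min 1 (c / (k + 1)) ≤ gfun c M := by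
  induction M with
  | zero =>
    simp only [Nat.cast_zero, range_zero, sum_empty, gfun]
    rw [min_eq_left (by linarith : (0:ℝ) ≤ c)]
    rw [max_eq_right (by rw [zero_div]; norm_num : (0:ℝ)/c ≤ 1), Real.log_one]
    simp
  | succ M ih =>
    rw [Finset.sum_range_succ]
    have := harmonic_step hc M
    push_cast
    push_cast at ih this
    linarith

lemma greedy_cover {P Q : Type*} [Fintype P] [Fintype Q] (E : P → Q → Prop)
    (a : ℕ) (ha : 1 ≤ a)
    (hP : ∀ p : P, a ≤ Nat.card {q : Q // E p q}) (S : Finset P) :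
    ∃ Q' : Finset Q, (∀ p ∈ S, ∃ q ∈ Q', E p q) ∧
      (Q'.card : ℝ) ≤ ∑ k ∈ range S.card,
        min 1 ((Fintype.card Q : ℝ) / a / (k + 1)) := by
  classical
  induction S using Finset.strongInduction with
  | _ S IH =>
  rcases S.eq_empty_or_nonempty with rfl | hS
  · exact ⟨∅, by simp, by simp⟩
  obtain ⟨p0, hp0⟩ := hS
  have hdeg : ∀ p : P, a ≤ (univ.filter fun q => E p q).card := by
    intro p
    have := hP p
    rwa [Nat.card_eq_fintype_card, Fintype.card_subtype] at this
  have hQne : (univ : Finset Q).Nonempty := by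
    have h1 : 0 < (univ.filter fun q => E p0 q).card := lt_of_lt_of_le ha (hdeg p0)
    obtain ⟨q, hq⟩ := Finset.card_pos.mp h1
    exact ⟨q, mem_univ q⟩
  obtain ⟨q0, -, hq0max⟩ :=
    Finset.exists_max_image univ (fun q => (S.filter fun p => E p q).card) hQne
  set u := (S.filter fun p => E p q0).card with hu
  set n := Fintype.card Q with hn
  have hcount : a * S.card ≤ n * u := by
    calc a * S.card = ∑ _p ∈ S, a := by rw [Finset.sum_const, smul_eq_mul, mul_comm]
      _ ≤ ∑ p ∈ S, (univ.filter fun q => E p q).card :=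
          Finset.sum_le_sum fun p _ => hdeg p
      _ = ∑ q ∈ univ, (S.filter fun p => E p q).card := by
          simp only [Finset.card_filter]; exact Finset.sum_comm
      _ ≤ (univ : Finset Q).card • u :=
          Finset.sum_le_card_nsmul _ _ _ (fun q _ => hq0max q (mem_univ q))
      _ = n * u := by rw [smul_eq_mul, Finset.card_univ]
  have h0 : 0 < a * S.card := Nat.mul_pos ha (Finset.card_pos.mpr ⟨p0, hp0⟩)
  have hnu : 0 < n * u := lt_of_lt_of_le h0 hcount
  have hu1 : 0 < u := Nat.pos_of_ne_zero fun h => by simp [h] at hnu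
  have hn1 : 0 < n := Nat.pos_of_ne_zero fun h => by simp [h] at hnu
  set S' := S.filter fun p => ¬ E p q0 with hS'
  have hss : S' ⊂ S := by
    rw [hS', Finset.filter_ssubset]
    obtain ⟨p1, hp1⟩ := Finset.card_pos.mp hu1
    rw [Finset.mem_filter] at hp1
    exact ⟨p1, hp1.1, not_not_intro hp1.2⟩
  have hcardS : u + S'.card = S.card := Finset.card_filter_add_card_filter_not _
  obtain ⟨Q'', hcov, hcard⟩ := IH S' hss
  refine ⟨insert q0 Q'', ?_, ?_⟩
  · intro p hp
    by_cases h : E p q0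
    · exact ⟨q0, Finset.mem_insert_self _ _, h⟩
    · obtain ⟨q, hq, hEq⟩ := hcov p (Finset.mem_filter.mpr ⟨hp, h⟩)
      exact ⟨q, Finset.mem_insert_of_mem hq, hEq⟩
  · have hins : ((insert q0 Q'').card : ℝ) ≤ (Q''.card : ℝ) + 1 := by
      exact_mod_cast Finset.card_insert_le _ _
    set c : ℝ := (n : ℝ) / a with hc
    have hc0 : 0 ≤ c := by positivity
    have hcS : S.card = S'.card + u := by omega
    have hsplit := Finset.sum_range_add (fun k : ℕ => min 1 (c / ((k : ℝ) + 1))) S'.card u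
    have hterm : ∀ i ∈ range u, min 1 (c / (S.card : ℝ)) ≤
        min 1 (c / (((S'.card + i : ℕ) : ℝ) + 1)) := by
      intro i hi
      rw [Finset.mem_range] at hi
      refine min_le_min le_rfl ?_
      have h1 : ((S'.card + i : ℕ) : ℝ) + 1 ≤ (S.card : ℝ) := by
        exact_mod_cast (by omega : S'.card + i + 1 ≤ S.card)
      have h2 : (0:ℝ) < ((S'.card + i : ℕ) : ℝ) + 1 := by positivity
      gcongr
    have hsum1 : (u : ℝ) * min 1 (c / (S.card : ℝ)) ≤
        ∑ i ∈ range u, min 1 (c / (((S'.card + i : ℕ) : ℝ) + 1)) := by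
      calc (u : ℝ) * min 1 (c / (S.card : ℝ))
          = (range u).card • min 1 (c / (S.card : ℝ)) := by
            rw [Finset.card_range, nsmul_eq_mul]
        _ ≤ _ := Finset.card_nsmul_le_sum _ _ _ hterm
    have hone : (1:ℝ) ≤ (u : ℝ) * min 1 (c / (S.card : ℝ)) := by
      have hM0 : (0:ℝ) < (S.card : ℝ) := by
        exact_mod_cast Finset.card_pos.mpr ⟨p0, hp0⟩
      have hu1' : (1:ℝ) ≤ (u : ℝ) := by exact_mod_cast hu1
      rcases le_total 1 (c / (S.card : ℝ)) with h | h
      · rw [min_eq_left h]; linarith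
      · rw [min_eq_right h]
        have hcnt : ((a:ℝ)) * (S.card : ℝ) ≤ (n : ℝ) * u := by exact_mod_cast hcount
        have ha0 : (0:ℝ) < (a : ℝ) := by exact_mod_cast ha
        have hSpos : (0:ℝ) < (a : ℝ) * (S.card : ℝ) := by positivity
        have heq : (u : ℝ) * (c / (S.card : ℝ)) = ((n:ℝ) * u) / ((a:ℝ) * (S.card : ℝ)) := by
          rw [hc]; field_simp
        rw [heq, le_div_iff₀ hSpos, one_mul]
        exact hcnt
    calc ((insert q0 Q'').card : ℝ) ≤ (Q''.card : ℝ) + 1 := hins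
      _ ≤ (∑ k ∈ range S'.card, min 1 (c / (k + 1))) + 1 := by linarith
      _ ≤ (∑ k ∈ range S'.card, min 1 (c / (k + 1))) +
          ∑ i ∈ range u, min 1 (c / (((S'.card + i : ℕ) : ℝ) + 1)) := by linarith
      _ = ∑ k ∈ range (S'.card + u), min 1 (c / ((k : ℝ) + 1)) := hsplit.symm
      _ = _ := by rw [hcS]

/-- Lovász–Stein: in a finite bipartite graph with parts `P`, `Q`
(adjacency relation `E`), if every `p ∈ P` has degree at least `a ≥ 1` and every
`q ∈ Q` has degree at most `b ≥ 1`, then some `Q' ⊆ Q` covering `P` has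
`|Q'| ≤ (|Q|/a)(1 + ln b)`. -/
theorem lovasz_stein {P Q : Type*} [Fintype P] [Fintype Q] (E : P → Q → Prop)
    (a b : ℕ) (ha : 1 ≤ a) (hb : 1 ≤ b)
    (hP : ∀ p : P, a ≤ Nat.card {q : Q // E p q})
    (hQ : ∀ q : Q, Nat.card {p : P // E p q} ≤ b) :
    ∃ Q' : Finset Q, (∀ p : P, ∃ q ∈ Q', E p q) ∧
      (Q'.card : ℝ) ≤ ((Fintype.card Q : ℝ) / a) * (1 + Real.log b) := by
  classical
  obtain ⟨Q', hcov, hcard⟩ := greedy_cover E a ha hP univ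
  refine ⟨Q', fun p => hcov p (mem_univ p), hcard.trans ?_⟩
  set n := Fintype.card Q with hn
  set c : ℝ := (n : ℝ) / a with hc
  have hlogb : 0 ≤ Real.log b := Real.log_nonneg (by exact_mod_cast hb)
  rcases Nat.eq_zero_or_pos (univ : Finset P).card with h | h
  · rw [h]
    simp only [range_zero, sum_empty]
    have h1 : 0 ≤ c := by positivity
    nlinarith
  · -- P nonempty
    obtain ⟨p0, -⟩ := Finset.card_pos.mp h
    have hna : a ≤ n := by
      have h1 := hP p0
      have h2 : Nat.card {q : Q // E p0 q} ≤ n := by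
        rw [Nat.card_eq_fintype_card, hn]
        exact Fintype.card_subtype_le _
      omega
    have ha0 : (0:ℝ) < (a:ℝ) := by exact_mod_cast ha
    have hc1 : 1 ≤ c := by
      rw [hc, le_div_iff₀ ha0, one_mul]
      exact_mod_cast hna
    refine (telescope hc1 _).trans ?_
    -- need gfun c (card univ) ≤ c * (1 + log b)
    have hMcb : ((univ : Finset P).card : ℝ) ≤ c * b := by
      have hcnt : a * (univ : Finset P).card ≤ n * b := by
        have hdeg : ∀ p : P, a ≤ (univ.filter fun q => E p q).card := by
          intro p
          have := hP p
          rwa [Nat.card_eq_fintype_card, Fintype.card_subtype] at this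
        have hdeg' : ∀ q : Q, (univ.filter fun p => E p q).card ≤ b := by
          intro q
          have := hQ q
          rwa [Nat.card_eq_fintype_card, Fintype.card_subtype] at this
        calc a * (univ : Finset P).card = ∑ _p ∈ (univ : Finset P), a := by
              rw [Finset.sum_const, smul_eq_mul, mul_comm]
          _ ≤ ∑ p ∈ (univ : Finset P), (univ.filter fun q => E p q).card :=
              Finset.sum_le_sum fun p _ => hdeg p
          _ = ∑ q ∈ (univ : Finset Q), (univ.filter fun p => E p q).card := by
              simp only [Finset.card_filter]; exact Finset.sum_comm
          _ ≤ ∑ _q ∈ (univ : Finset Q), b := Finset.sum_le_sum fun q _ => hdeg' q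
          _ = n * b := by rw [Finset.sum_const, smul_eq_mul, Finset.card_univ]
      have : ((a:ℝ) * (univ : Finset P).card) ≤ (n:ℝ) * b := by exact_mod_cast hcnt
      rw [hc, div_mul_eq_mul_div, le_div_iff₀ ha0]
      linarith
    set M : ℝ := ((univ : Finset P).card : ℝ) with hM
    have hc0 : (0:ℝ) < c := by linarith
    unfold gfun
    have h3 : min M c ≤ c := min_le_right _ _
    have hmaxb : max (M / c) 1 ≤ (b : ℝ) := by
      refine max_le ?_ (by exact_mod_cast hb)
      rw [div_le_iff₀ hc0]
      linarith [hMcb]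
    have h4 : Real.log (max (M / c) 1) ≤ Real.log b :=
      Real.log_le_log (lt_of_lt_of_le zero_lt_one (le_max_right _ _)) hmaxb
    have h5 : c * Real.log (max (M / c) 1) ≤ c * Real.log b :=
      mul_le_mul_of_nonneg_left h4 (le_of_lt hc0)
    have : c * (1 + Real.log b) = c + c * Real.log b := by ring
    linarith
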